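/- Given a real sequence (β_t)_{t≥0} with β₀ = 1 and β_t ∈ (0, 1] for t ≥ 1, define for 0 ≤ j ≤ t the weights θ_j^{(t)} = β_j ∏_{i=j+1}^{t} (1 − β_i), with θ_t^{(t)} = β_t. Let (z_t)_{t≥1} ⊂ ℝ^p and define x₁ = z₁ and x_{t+1} = (1 − β_t) x_t + β_t z_{t+1} for t ≥ 1. Set 𝒟_t = ∑_{j=0}^{t−1} θ_j^{(t−1)} ‖z_{j+1} − x_t‖² and ℱ_t = ∑_{j=0}^{t−1} θ_j^{(t−1)} ‖x_t − z_{j+1}‖. Then for every t ≥ 1: 𝒟_{t+1} ≤ (1 − β_t) 𝒟_t + (2/β_t) ‖x_{t+1} − x_t‖² + β_t ℱ_t². -/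

import Mathlib

open RealInnerProductSpace

/-- The weights `θ_j^{(t-1)}` sum to one. -/
lemma stmt_6_sum_theta (β : ℕ → ℝ) (hβ0 : β 0 = 1) :
    ∀ t : ℕ, 1 ≤ t →
      ∑ j ∈ Finset.range t, β j * ∏ i ∈ Finset.Ioc j (t - 1), (1 - β i) = 1 := by
  intro t
  induction t with
  | zero => omega
  | succ n ih =>
    intro _
    rcases Nat.eq_zero_or_pos n with hn | hn
    · subst hn; simp [hβ0]
    · have hI : ∀ j ∈ Finset.range n,
          ∏ i ∈ Finset.Ioc j (n + 1 - 1), (1 - β i)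
            = (∏ i ∈ Finset.Ioc j (n - 1), (1 - β i)) * (1 - β n) := by
        intro j hj
        have hj' : j ≤ n - 1 := Nat.le_sub_one_of_lt (Finset.mem_range.mp hj)
        have h1 : n + 1 - 1 = (n - 1) + 1 := by omega
        have h3 : n - 1 + 1 = n := by omega
        rw [h1, Finset.prod_Ioc_succ_top hj', h3]
      rw [Finset.sum_range_succ]
      have h2 : ∑ j ∈ Finset.range n, β j * ∏ i ∈ Finset.Ioc j (n + 1 - 1), (1 - β i)
          = (1 - β n) * ∑ j ∈ Finset.range n, β j * ∏ i ∈ Finset.Ioc j (n - 1), (1 - β i) := by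
        rw [Finset.mul_sum]
        refine Finset.sum_congr rfl fun j hj => ?_
        rw [hI j hj]; ring
      rw [h2, ih hn]
      simp

/-- Scalar inequality used in the final step. -/
lemma stmt_6_scalar (b D F d S I : ℝ) (hb0 : 0 < b) (hb1 : b ≤ 1)
    (hF : 0 ≤ F) (hd : 0 ≤ d) (hS : 0 ≤ S) (hSF : S ≤ F) (hI : |I| ≤ S * d) :
    (1 - b) * (D - 2 * I + d ^ 2) + b * ((1 - b) / b * d) ^ 2 ≤
      (1 - b) * D + (2 / b) * d ^ 2 + b * F ^ 2 := by
  have hb : b ≠ 0 := ne_of_gt hb0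
  have h1 : b * ((1 - b) / b * d) ^ 2 = (1 - b) ^ 2 * d ^ 2 / b := by
    field_simp
  rw [h1]
  rw [← mul_le_mul_iff_right₀ hb0]
  have e1 : b * ((1 - b) * (D - 2 * I + d ^ 2) + (1 - b) ^ 2 * d ^ 2 / b)
      = b * (1 - b) * (D - 2 * I + d ^ 2) + (1 - b) ^ 2 * d ^ 2 := by
    field_simp
  have e2 : b * ((1 - b) * D + 2 / b * d ^ 2 + b * F ^ 2)
      = b * (1 - b) * D + 2 * d ^ 2 + b ^ 2 * F ^ 2 := by
    field_simp
  rw [e1, e2]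
  obtain ⟨hI1, hI2⟩ := abs_le.mp hI
  have hb1' : (0:ℝ) ≤ 1 - b := by linarith
  have hbb : (0:ℝ) ≤ b * (1 - b) := mul_nonneg hb0.le hb1'
  nlinarith [mul_nonneg hbb (by linarith : 0 ≤ I + S * d),
    mul_nonneg (mul_nonneg hbb hd) (by linarith : 0 ≤ F - S),
    mul_nonneg hb1' (sq_nonneg (b * F - d)),
    mul_nonneg hb0.le (sq_nonneg d),
    mul_nonneg hb0.le (mul_nonneg (mul_nonneg hb0.le hb0.le) (sq_nonneg F))]

/-- Recurrence for the weighted squared dispersion `𝒟_t` of the auxiliary points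
`z_{j+1}` around the averaged iterate `x_t` (proof of Lemma 2). -/
theorem stmt_6 (p : ℕ) (β : ℕ → ℝ) (hβ0 : β 0 = 1)
    (hβ : ∀ t : ℕ, 1 ≤ t → 0 < β t ∧ β t ≤ 1)
    (z x : ℕ → EuclideanSpace ℝ (Fin p))
    (hx1 : x 1 = z 1)
    (hxrec : ∀ t : ℕ, 1 ≤ t → x (t + 1) = (1 - β t) • x t + β t • z (t + 1))
    (t : ℕ) (ht : 1 ≤ t) :
    (∑ j ∈ Finset.range (t + 1),
        (β j * ∏ i ∈ Finset.Ioc j t, (1 - β i)) * ‖z (j + 1) - x (t + 1)‖ ^ 2) ≤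
      (1 - β t) * (∑ j ∈ Finset.range t,
          (β j * ∏ i ∈ Finset.Ioc j (t - 1), (1 - β i)) * ‖z (j + 1) - x t‖ ^ 2)
        + (2 / β t) * ‖x (t + 1) - x t‖ ^ 2
        + β t * (∑ j ∈ Finset.range t,
            (β j * ∏ i ∈ Finset.Ioc j (t - 1), (1 - β i)) * ‖x t - z (j + 1)‖) ^ 2 := by
  obtain ⟨hb0, hb1⟩ := hβ t ht
  set θ : ℕ → ℝ := fun j => β j * ∏ i ∈ Finset.Ioc j (t - 1), (1 - β i) with hθdef
  have hθnn : ∀ j, 0 ≤ θ j := by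
    intro j
    apply mul_nonneg
    · rcases Nat.eq_zero_or_pos j with h | h
      · simp [h, hβ0]
      · exact (hβ j h).1.le
    · apply Finset.prod_nonneg
      intro i hi
      have hi1 : 1 ≤ i := lt_of_le_of_lt (Nat.zero_le j) (Finset.mem_Ioc.mp hi).1
      linarith [(hβ i hi1).2]
  have hsum1 : ∑ j ∈ Finset.range t, θ j = 1 := stmt_6_sum_theta β hβ0 t ht
  set Δ : EuclideanSpace ℝ (Fin p) := x (t + 1) - x t with hΔdef
  set d : ℝ := ‖Δ‖ with hddef
  set D : ℝ := ∑ j ∈ Finset.range t, θ j * ‖z (j + 1) - x t‖ ^ 2 with hDdef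
  set F : ℝ := ∑ j ∈ Finset.range t, θ j * ‖x t - z (j + 1)‖ with hFdef
  set s : EuclideanSpace ℝ (Fin p) :=
    ∑ j ∈ Finset.range t, θ j • (z (j + 1) - x t) with hsdef
  -- split the LHS sum
  have hcoef : ∀ j ∈ Finset.range t,
      β j * ∏ i ∈ Finset.Ioc j t, (1 - β i) = θ j * (1 - β t) := by
    intro j hj
    have hj' : j ≤ t - 1 := Nat.le_sub_one_of_lt (Finset.mem_range.mp hj)
    have h1 : t = (t - 1) + 1 := (Nat.succ_pred_eq_of_pos ht).symm
    rw [hθdef]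
    conv_lhs => rw [h1]
    rw [Finset.prod_Ioc_succ_top hj', ← h1]
    ring
  have hLHS : ∑ j ∈ Finset.range (t + 1),
      (β j * ∏ i ∈ Finset.Ioc j t, (1 - β i)) * ‖z (j + 1) - x (t + 1)‖ ^ 2
      = (1 - β t) * (∑ j ∈ Finset.range t, θ j * ‖z (j + 1) - x (t + 1)‖ ^ 2)
        + β t * ‖z (t + 1) - x (t + 1)‖ ^ 2 := by
    rw [Finset.sum_range_succ, Finset.mul_sum]
    congr 1
    · refine Finset.sum_congr rfl fun j hj => ?_
      rw [hcoef j hj]; ring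
    · simp
  -- expand the inner sum
  have hexp : ∑ j ∈ Finset.range t, θ j * ‖z (j + 1) - x (t + 1)‖ ^ 2
      = D - 2 * ⟪s, Δ⟫ + d ^ 2 := by
    have hterm : ∀ j, ‖z (j + 1) - x (t + 1)‖ ^ 2
        = ‖z (j + 1) - x t‖ ^ 2 - 2 * ⟪z (j + 1) - x t, Δ⟫ + d ^ 2 := by
      intro j
      have h1 : z (j + 1) - x (t + 1) = (z (j + 1) - x t) - Δ := by
        rw [hΔdef]; abel
      rw [h1, hddef, @norm_sub_sq_real]
    have hinner : ⟪s, Δ⟫ = ∑ j ∈ Finset.range t, θ j * ⟪z (j + 1) - x t, Δ⟫ := by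
      rw [hsdef, sum_inner]
      exact Finset.sum_congr rfl fun j _ => real_inner_smul_left _ _ _
    calc ∑ j ∈ Finset.range t, θ j * ‖z (j + 1) - x (t + 1)‖ ^ 2
        = ∑ j ∈ Finset.range t,
            (θ j * ‖z (j + 1) - x t‖ ^ 2 - 2 * (θ j * ⟪z (j + 1) - x t, Δ⟫)
              + θ j * d ^ 2) := by
          refine Finset.sum_congr rfl fun j _ => ?_
          rw [hterm j]; ring
      _ = D - 2 * ⟪s, Δ⟫ + d ^ 2 := by
          rw [Finset.sum_add_distrib, Finset.sum_sub_distrib, ← Finset.mul_sum,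
            ← Finset.sum_mul, hsum1, hinner, hDdef]
          ring
  -- the last point
  have hlast : z (t + 1) - x (t + 1) = ((1 - β t) / β t) • Δ := by
    have hrec := hxrec t ht
    have hz : β t • (z (t + 1) - x (t + 1)) = (1 - β t) • Δ := by
      rw [hΔdef, hrec]
      module
    have := congrArg (fun v => (β t)⁻¹ • v) hz
    simpa [smul_smul, inv_mul_cancel₀ (ne_of_gt hb0), div_eq_inv_mul] using this
  have hlastnorm : ‖z (t + 1) - x (t + 1)‖ = (1 - β t) / β t * d := by
    rw [hlast, norm_smul, hddef, Real.norm_eq_abs,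
      abs_of_nonneg (div_nonneg (by linarith) hb0.le)]
  -- bounds
  have hsF : ‖s‖ ≤ F := by
    rw [hsdef, hFdef]
    refine (norm_sum_le _ _).trans ?_
    refine Finset.sum_le_sum fun j _ => ?_
    rw [norm_smul, Real.norm_eq_abs, abs_of_nonneg (hθnn j), norm_sub_rev]
  have hIbound : |⟪s, Δ⟫| ≤ ‖s‖ * d := by
    rw [hddef]; exact abs_real_inner_le_norm s Δ
  have hIbound' : |⟪s, Δ⟫| ≤ ‖s‖ * d := hIbound
  have hFnn : 0 ≤ F := by
    rw [hFdef]
    exact Finset.sum_nonneg fun j _ => mul_nonneg (hθnn j) (norm_nonneg _)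
  -- conclude
  rw [hLHS, hexp, hlastnorm]
  have := stmt_6_scalar (β t) D F d ‖s‖ ⟪s, Δ⟫ hb0 hb1 hFnn (norm_nonneg Δ)
    (norm_nonneg s) hsF hIbound'
  calc (1 - β t) * (D - 2 * ⟪s, Δ⟫ + d ^ 2) + β t * ((1 - β t) / β t * d) ^ 2
      ≤ (1 - β t) * D + (2 / β t) * d ^ 2 + β t * F ^ 2 := this
    _ = (1 - β t) * D + (2 / β t) * ‖x (t + 1) - x t‖ ^ 2 + β t * F ^ 2 := by
        rw [hddef, hΔdef]
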